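/- The matrix S∞ = (I − K)⁻¹ * F dominates F entrywise, i.e. S∞ i j ≥ F i j ≥ 0 for all i, j; consequently, if F is irreducible then S∞ is irreducible. -/

import Mathlib

open Matrix Finset

/-- The matrix `S∞ = (I − K)⁻¹ * F` dominates `F` entrywise, i.e.
`S∞ i j ≥ F i j ≥ 0` for all `i, j`; consequently, if `F` is irreducible then
`S∞` is irreducible (irreducible: for every `(i,j)` there is `k ≥ 1` with
`(X^k) i j > 0`). -/
theorem stmt_2 (n : ℕ) (hn : 1 ≤ n)
    (F : Matrix (Fin n) (Fin n) ℝ)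
    (hFnonneg : ∀ i j, 0 ≤ F i j)
    (hFrow : ∀ i, ∑ j, F i j = 1)
    (b : Fin n → ℝ) (hb0 : ∀ j, 0 ≤ b j) (hb1 : ∀ j, b j < 1)
    (K : Matrix (Fin n) (Fin n) ℝ)
    (hK : ∀ i j, K i j = F i j * b j)
    (hInv : IsUnit (1 - K))
    (S : Matrix (Fin n) (Fin n) ℝ)
    (hS : S = (1 - K)⁻¹ * F) :
    (∀ i j, F i j ≤ S i j ∧ 0 ≤ F i j) ∧
    ((∀ i j, ∃ k : ℕ, 1 ≤ k ∧ 0 < (F ^ k) i j) →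
      (∀ i j, ∃ k : ℕ, 1 ≤ k ∧ 0 < (S ^ k) i j)) := by
  haveI : NeZero n := ⟨by omega⟩
  set A : Matrix (Fin n) (Fin n) ℝ := (1 - K)⁻¹ with hA
  have hdet : IsUnit (1 - K).det := (Matrix.isUnit_iff_isUnit_det _).mp hInv
  have hAmul : A * (1 - K) = 1 := Matrix.nonsing_inv_mul _ hdet
  -- β : uniform bound on b
  obtain ⟨j₀⟩ : Nonempty (Fin n) := inferInstance
  set β : ℝ := Finset.univ.sup' Finset.univ_nonempty b with hβ
  have hβ0 : 0 ≤ β := le_trans (hb0 j₀) (Finset.le_sup' b (Finset.mem_univ j₀))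
  have hβ1 : β < 1 := by
    rw [hβ, Finset.sup'_lt_iff]
    exact fun j _ => hb1 j
  have hKnn : ∀ i j, 0 ≤ K i j := fun i j => by
    rw [hK]; exact mul_nonneg (hFnonneg i j) (hb0 j)
  have hKrow : ∀ i, ∑ j, K i j ≤ β := fun i => by
    calc ∑ j, K i j ≤ ∑ j, F i j * β := by
          refine Finset.sum_le_sum fun j _ => ?_
          rw [hK]
          exact mul_le_mul_of_nonneg_left (Finset.le_sup' b (Finset.mem_univ j))
            (hFnonneg i j)
      _ = β := by rw [← Finset.sum_mul, hFrow, one_mul]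
  -- powers of K are nonnegative
  have hpownn : ∀ N, ∀ i j, 0 ≤ (K ^ N) i j := by
    intro N
    induction N with
    | zero => intro i j; simp [Matrix.one_apply]; positivity
    | succ N ih =>
        intro i j
        rw [pow_succ, Matrix.mul_apply]
        exact Finset.sum_nonneg fun l _ => mul_nonneg (ih i l) (hKnn l j)
  -- row sums of K^N are ≤ β^N
  have hpowrow : ∀ N, ∀ i, ∑ j, (K ^ N) i j ≤ β ^ N := by
    intro N
    induction N with
    | zero => intro i; simp [Matrix.one_apply]
    | succ N ih =>
        intro i
        have : ∑ j, (K ^ (N + 1)) i j = ∑ l, K i l * ∑ j, (K ^ N) l j := by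
          rw [pow_succ']
          simp only [Matrix.mul_apply]
          rw [Finset.sum_comm]
          simp [Finset.mul_sum]
        rw [this, pow_succ']
        calc ∑ l, K i l * ∑ j, (K ^ N) l j ≤ ∑ l, K i l * β ^ N :=
              Finset.sum_le_sum fun l _ =>
                mul_le_mul_of_nonneg_left (ih l) (hKnn i l)
          _ = (∑ l, K i l) * β ^ N := by rw [Finset.sum_mul]
          _ ≤ β * β ^ N :=
              mul_le_mul_of_nonneg_right (hKrow i) (pow_nonneg hβ0 N)
  -- entries of K^N are ≤ β^N
  have hpowent : ∀ N, ∀ i j, (K ^ N) i j ≤ β ^ N := fun N i j =>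
    le_trans (Finset.single_le_sum (fun l _ => hpownn N i l) (Finset.mem_univ j))
      (hpowrow N i)
  -- A = ∑_{m<N} K^m + A * K^N
  have hdecomp : ∀ N : ℕ, A = (∑ m ∈ Finset.range N, K ^ m) + A * K ^ N := by
    intro N
    have h1 : (1 - K) * ∑ m ∈ Finset.range N, K ^ m = 1 - K ^ N := by
      rw [← neg_sub K 1, neg_mul, mul_geom_sum, neg_sub]
    have h2 : A * ((1 - K) * ∑ m ∈ Finset.range N, K ^ m) = A * (1 - K ^ N) := by
      rw [h1]
    rw [← mul_assoc, hAmul, one_mul, mul_sub, mul_one] at h2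
    rw [h2, sub_add_cancel]
  -- entries of A are nonnegative
  have hAnn : ∀ i j, 0 ≤ A i j := by
    intro i j
    set C : ℝ := ∑ l, |A i l| with hC
    have hC0 : 0 ≤ C := Finset.sum_nonneg fun l _ => abs_nonneg _
    have hbound : ∀ N : ℕ, -(C * β ^ N) ≤ A i j := by
      intro N
      have h1 : A i j = (∑ m ∈ Finset.range N, (K ^ m) i j) + (A * K ^ N) i j := by
        conv_lhs => rw [hdecomp N]
        simp [Matrix.add_apply, Matrix.sum_apply]
      have h2 : -(C * β ^ N) ≤ (A * K ^ N) i j := by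
        rw [Matrix.mul_apply, hC, Finset.sum_mul, ← Finset.sum_neg_distrib]
        refine Finset.sum_le_sum fun l _ => ?_
        have h3 : |A i l * (K ^ N) l j| ≤ |A i l| * β ^ N := by
          rw [abs_mul]
          refine mul_le_mul_of_nonneg_left ?_ (abs_nonneg _)
          rw [abs_of_nonneg (hpownn N l j)]
          exact hpowent N l j
        nlinarith [neg_abs_le (A i l * (K ^ N) l j)]
      have h4 : 0 ≤ ∑ m ∈ Finset.range N, (K ^ m) i j :=
        Finset.sum_nonneg fun m _ => hpownn m i j
      linarith
    have hlim : Filter.Tendsto (fun N : ℕ => -(C * β ^ N)) Filter.atTop (nhds 0) := by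
      have := (tendsto_pow_atTop_nhds_zero_of_lt_one hβ0 hβ1).const_mul C
      simpa using this.neg
    exact le_of_tendsto hlim (Filter.Eventually.of_forall hbound)
  -- A = 1 + A * K
  have hA1 : A = 1 + A * K := by
    have h : A * 1 - A * K = 1 := by rw [← mul_sub]; exact hAmul
    rw [mul_one] at h
    rw [← h, sub_add_cancel]
  -- S dominates F
  have hdom : ∀ i j, F i j ≤ S i j := by
    intro i j
    have hSid : S = F + A * (K * F) := by
      rw [hS]; nth_rewrite 1 [hA1]; rw [add_mul, one_mul, mul_assoc]
    rw [hSid, Matrix.add_apply]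
    have : 0 ≤ (A * (K * F)) i j := by
      rw [Matrix.mul_apply]
      refine Finset.sum_nonneg fun l _ => mul_nonneg (hAnn i l) ?_
      rw [Matrix.mul_apply]
      exact Finset.sum_nonneg fun m _ => mul_nonneg (hKnn l m) (hFnonneg m j)
    linarith
  refine ⟨fun i j => ⟨hdom i j, hFnonneg i j⟩, ?_⟩
  -- powers: F^k ≤ S^k entrywise, with F^k nonneg
  have hpow : ∀ k : ℕ, ∀ i j, 0 ≤ (F ^ k) i j ∧ (F ^ k) i j ≤ (S ^ k) i j := by
    intro k
    induction k with
    | zero =>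
        intro i j
        refine ⟨?_, le_refl _⟩
        rw [pow_zero, Matrix.one_apply]
        split <;> norm_num
    | succ k ih =>
        intro i j
        rw [pow_succ, pow_succ, Matrix.mul_apply, Matrix.mul_apply]
        constructor
        · exact Finset.sum_nonneg fun l _ =>
            mul_nonneg (ih i l).1 (hFnonneg l j)
        · refine Finset.sum_le_sum fun l _ => ?_
          exact mul_le_mul (ih i l).2 (hdom l j) (hFnonneg l j)
            (le_trans (ih i l).1 (ih i l).2)
  intro hirr i j
  obtain ⟨k, hk1, hk⟩ := hirr i j
  exact ⟨k, hk1, lt_of_lt_of_le hk (hpow k i j).2⟩
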